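/- arXiv:2301.03159 — 2 statements merged into one kernel-verified Lean document; each statement's English description precedes it below -/
import Mathlib

section
/- For every bounded linear operator A on a complex Hilbert space, (1/4)·w(|A| + i|A*|)² + (1/8)·‖|A|² + |A*|²‖ + (1/4)·w(|A||A*|) ≤ (1/2)·‖|A|² + |A*|²‖; i.e., the bound of the refined numerical radius inequality does not exceed Kittaneh's bound (1/2)‖A*A + AA*‖. -/
open scoped InnerProductSpace

variable {H : Type*} [NormedAddCommGroup H] [InnerProductSpace ℂ H] [CompleteSpace H]

/-- The numerical radius of a bounded linear operator. -/
noncomputable def numRad (A : H →L[ℂ] H) : ℝ :=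
  sSup {r : ℝ | ∃ x : H, ‖x‖ = 1 ∧ r = ‖⟪A x, x⟫_ℂ‖}

/-- The absolute value `|A| = (A*A)^(1/2)` of a bounded linear operator. -/
noncomputable def oabs (A : H →L[ℂ] H) : H →L[ℂ] H :=
  CFC.sqrt (ContinuousLinearMap.adjoint A * A)

/-- The spectral radius (as a real number). -/
noncomputable def specRad (A : H →L[ℂ] H) : ℝ := (spectralRadius ℂ A).toReal

set_option synthInstance.maxHeartbeats 1000000 in
lemma oabs_sa (A : H →L[ℂ] H) : IsSelfAdjoint (oabs A) :=
  IsSelfAdjoint.of_nonneg (CFC.sqrt_nonneg _)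

lemma numRad_le (A : H →L[ℂ] H) (c : ℝ) (hc : 0 ≤ c)
    (h : ∀ x : H, ‖x‖ = 1 → ‖⟪A x, x⟫_ℂ‖ ≤ c) : numRad A ≤ c := by
  refine Real.sSup_le ?_ hc
  rintro r ⟨x, hx, rfl⟩
  exact h x hx

lemma numRad_nonneg (A : H →L[ℂ] H) : 0 ≤ numRad A :=
  Real.sSup_nonneg (by rintro r ⟨x, hx, rfl⟩; exact norm_nonneg _)

lemma key_sq (P Q : H →L[ℂ] H) (hP : IsSelfAdjoint P) (hQ : IsSelfAdjoint Q)
    {x : H} (hx : ‖x‖ = 1) :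
    ‖P x‖ ^ 2 + ‖Q x‖ ^ 2 ≤ ‖P ^ 2 + Q ^ 2‖ := by
  have h2 : (⟪(P ^ 2 + Q ^ 2) x, x⟫_ℂ).re = ‖P x‖ ^ 2 + ‖Q x‖ ^ 2 := by
    have e : (P ^ 2 + Q ^ 2) x = P (P x) + Q (Q x) := by
      simp [pow_two, ContinuousLinearMap.mul_apply]
    rw [e, inner_add_left, hP.isSymmetric.apply_clm, hQ.isSymmetric.apply_clm]
    simp [inner_self_eq_norm_sq_to_K]
    norm_cast
  rw [← h2]
  calc (⟪(P ^ 2 + Q ^ 2) x, x⟫_ℂ).re ≤ ‖⟪(P ^ 2 + Q ^ 2) x, x⟫_ℂ‖ := Complex.re_le_norm _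
    _ ≤ ‖(P ^ 2 + Q ^ 2) x‖ * ‖x‖ := norm_inner_le_norm _ _
    _ ≤ ‖P ^ 2 + Q ^ 2‖ * ‖x‖ * ‖x‖ := by
        gcongr; exact ContinuousLinearMap.le_opNorm _ _
    _ = ‖P ^ 2 + Q ^ 2‖ := by rw [hx]; ring

lemma lemA (P Q : H →L[ℂ] H) (hP : IsSelfAdjoint P) (hQ : IsSelfAdjoint Q)
    {x : H} (hx : ‖x‖ = 1) :
    ‖⟪(P + Complex.I • Q) x, x⟫_ℂ‖ ^ 2 ≤ ‖P ^ 2 + Q ^ 2‖ := by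
  set a := ⟪P x, x⟫_ℂ with ha
  set b := ⟪Q x, x⟫_ℂ with hb
  have haim : a.im = 0 := by
    have := hP.isSymmetric.conj_inner_sym x x
    exact Complex.conj_eq_iff_im.mp this
  have hbim : b.im = 0 := by
    have := hQ.isSymmetric.conj_inner_sym x x
    exact Complex.conj_eq_iff_im.mp this
  have hz : ⟪(P + Complex.I • Q) x, x⟫_ℂ = a + (starRingEnd ℂ) Complex.I * b := by
    simp [ContinuousLinearMap.add_apply, ContinuousLinearMap.smul_apply,
      inner_add_left, inner_smul_left, ha, hb]
    ring
  have hnormz : ‖⟪(P + Complex.I • Q) x, x⟫_ℂ‖ ^ 2 = a.re ^ 2 + b.re ^ 2 := by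
    rw [hz, Complex.sq_norm, Complex.normSq_apply]
    simp [Complex.conj_I, haim, hbim]
    ring
  have hca : ‖a‖ ≤ ‖P x‖ := by
    have := norm_inner_le_norm (𝕜 := ℂ) (P x) x
    simpa [hx, ha] using this
  have hcb : ‖b‖ ≤ ‖Q x‖ := by
    have := norm_inner_le_norm (𝕜 := ℂ) (Q x) x
    simpa [hx, hb] using this
  have hra : |a.re| ≤ ‖P x‖ := le_trans (Complex.abs_re_le_norm a) hca
  have hrb : |b.re| ≤ ‖Q x‖ := le_trans (Complex.abs_re_le_norm b) hcb
  have hS := key_sq P Q hP hQ hx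
  rw [hnormz]
  nlinarith [abs_nonneg a.re, abs_nonneg b.re, sq_abs a.re, sq_abs b.re]

lemma lemB (P Q : H →L[ℂ] H) (hP : IsSelfAdjoint P) (hQ : IsSelfAdjoint Q)
    {x : H} (hx : ‖x‖ = 1) :
    ‖⟪(P * Q) x, x⟫_ℂ‖ ≤ ‖P ^ 2 + Q ^ 2‖ / 2 := by
  have hz : ⟪(P * Q) x, x⟫_ℂ = ⟪Q x, P x⟫_ℂ := by
    rw [ContinuousLinearMap.mul_apply, hP.isSymmetric.apply_clm]
  have h1 : ‖⟪(P * Q) x, x⟫_ℂ‖ ≤ ‖Q x‖ * ‖P x‖ := by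
    rw [hz]; exact norm_inner_le_norm _ _
  have hS : ‖P x‖ ^ 2 + ‖Q x‖ ^ 2 ≤ ‖P ^ 2 + Q ^ 2‖ := key_sq P Q hP hQ hx
  nlinarith [sq_nonneg (‖P x‖ - ‖Q x‖)]

theorem stmt1 (A : H →L[ℂ] H) :
    (1 / 4) * numRad (oabs A + Complex.I • oabs (ContinuousLinearMap.adjoint A)) ^ 2
        + (1 / 8) * ‖oabs A ^ 2 + oabs (ContinuousLinearMap.adjoint A) ^ 2‖
        + (1 / 4) * numRad (oabs A * oabs (ContinuousLinearMap.adjoint A))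
      ≤ (1 / 2) * ‖oabs A ^ 2 + oabs (ContinuousLinearMap.adjoint A) ^ 2‖ := by
  set P := oabs A
  set Q := oabs (ContinuousLinearMap.adjoint A)
  have hP : IsSelfAdjoint P := oabs_sa A
  have hQ : IsSelfAdjoint Q := oabs_sa _
  set M := ‖P ^ 2 + Q ^ 2‖ with hMdef
  have hM : 0 ≤ M := norm_nonneg _
  have hw1 : numRad (P + Complex.I • Q) ≤ Real.sqrt M := by
    refine numRad_le _ _ (Real.sqrt_nonneg _) fun x hx => ?_
    have := lemA P Q hP hQ hx
    exact (Real.le_sqrt (norm_nonneg _) hM).mpr this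
  have hw1sq : numRad (P + Complex.I • Q) ^ 2 ≤ M := by
    calc numRad (P + Complex.I • Q) ^ 2 ≤ Real.sqrt M ^ 2 :=
          pow_le_pow_left₀ (numRad_nonneg _) hw1 2
      _ = M := Real.sq_sqrt hM
  have hw2 : numRad (P * Q) ≤ M / 2 :=
    numRad_le _ _ (by linarith) fun x hx => lemB P Q hP hQ hx
  linarith
end

section
/- Let X, Y be bounded linear operators on a complex Hilbert space, let 0 ≤ α ≤ 1 and 0 ≤ β ≤ 1, and let x be a unit vector. Then |⟨Xx,x⟩⟨Yx,x⟩| ≤ (1/4)·‖α|X|² + (1−α)|X*|² + β|Y|² + (1−β)|Y*|²‖ + (1/8)·‖|X|² + |Y*|²‖ + (1/4)·w(YX). -/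
open scoped InnerProductSpace

variable {H : Type*} [NormedAddCommGroup H] [InnerProductSpace ℂ H] [CompleteSpace H]

set_option synthInstance.maxHeartbeats 1000000 in
lemma oabs_sq (A : H →L[ℂ] H) : oabs A ^ 2 = ContinuousLinearMap.adjoint A * A := by
  have h : (0:H →L[ℂ] H) ≤ ContinuousLinearMap.adjoint A * A := by
    rw [← ContinuousLinearMap.star_eq_adjoint]; exact star_mul_self_nonneg A
  exact CFC.sq_sqrt _ h

lemma buzano (e u v : H) (he : ‖e‖ = 1) :
    ‖⟪u, e⟫_ℂ * ⟪e, v⟫_ℂ‖ ≤ (‖u‖ * ‖v‖ + ‖⟪u, v⟫_ℂ‖) / 2 := by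
  set c : ℂ := ⟪e, u⟫_ℂ with hc
  set w : H := ((2 : ℂ) * c) • e - u with hwdef
  have hw : ‖w‖ = ‖u‖ := by
    have h1 : ‖w‖ ^ 2 = ‖u‖ ^ 2 := by
      rw [hwdef, @norm_sub_sq ℂ]
      have h2 : ⟪((2:ℂ) * c) • e, u⟫_ℂ = 2 * (starRingEnd ℂ c) * c := by
        rw [inner_smul_left, map_mul, map_ofNat, ← hc]
      rw [h2]
      have h3 : ‖((2:ℂ) * c) • e‖ = 2 * ‖c‖ := by
        rw [norm_smul, he]; simp
      rw [h3]
      have h4 : (Complex.re (2 * (starRingEnd ℂ) c * c)) = 2 * ‖c‖ ^ 2 := by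
        have := Complex.normSq_eq_norm_sq c
        simp [Complex.mul_re, Complex.conj_re, Complex.conj_im,
          Complex.sq_norm, Complex.normSq_apply]
        ring
      rw [RCLike.re_to_complex] at *
      rw [h4]; ring
    have := sq_abs ‖w‖
    nlinarith [norm_nonneg w, norm_nonneg u]
  have key : ⟪w, v⟫_ℂ = 2 * (⟪u, e⟫_ℂ * ⟪e, v⟫_ℂ) - ⟪u, v⟫_ℂ := by
    rw [hwdef, inner_sub_left, inner_smul_left]
    have : (starRingEnd ℂ) ((2:ℂ) * c) = 2 * ⟪u, e⟫_ℂ := by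
      rw [map_mul, map_ofNat, hc, inner_conj_symm]
    rw [this]; ring
  have h5 : ‖(2:ℂ) * (⟪u, e⟫_ℂ * ⟪e, v⟫_ℂ)‖ ≤ ‖⟪w, v⟫_ℂ‖ + ‖⟪u, v⟫_ℂ‖ := by
    calc ‖(2:ℂ) * (⟪u, e⟫_ℂ * ⟪e, v⟫_ℂ)‖ = ‖⟪w, v⟫_ℂ + ⟪u, v⟫_ℂ‖ := by rw [key]; ring_nf
      _ ≤ ‖⟪w, v⟫_ℂ‖ + ‖⟪u, v⟫_ℂ‖ := norm_add_le _ _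
  have h6 : ‖⟪w, v⟫_ℂ‖ ≤ ‖u‖ * ‖v‖ := by
    calc ‖⟪w, v⟫_ℂ‖ ≤ ‖w‖ * ‖v‖ := norm_inner_le_norm _ _
      _ = ‖u‖ * ‖v‖ := by rw [hw]
  have h7 : ‖(2:ℂ) * (⟪u, e⟫_ℂ * ⟪e, v⟫_ℂ)‖ = 2 * ‖⟪u, e⟫_ℂ * ⟪e, v⟫_ℂ‖ := by
    rw [norm_mul]; norm_num
  linarith

lemma inner_real_smul_left' (γ : ℝ) (u v : H) : ⟪γ • u, v⟫_ℂ = (γ:ℂ) * ⟪u, v⟫_ℂ := by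
  rw [show γ • u = (γ:ℂ) • u from rfl, inner_smul_left]; simp

lemma norm_inner_le_numRad (A : H →L[ℂ] H) (x : H) (hx : ‖x‖ = 1) :
    ‖⟪A x, x⟫_ℂ‖ ≤ numRad A := by
  apply le_csSup
  · refine ⟨‖A‖, ?_⟩
    rintro r ⟨y, hy, rfl⟩
    calc ‖⟪A y, y⟫_ℂ‖ ≤ ‖A y‖ * ‖y‖ := norm_inner_le_norm _ _
      _ ≤ (‖A‖ * ‖y‖) * ‖y‖ := by
          exact mul_le_mul_of_nonneg_right (A.le_opNorm y) (norm_nonneg y)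
      _ = ‖A‖ := by rw [hy]; ring
  · exact ⟨x, hx, rfl⟩

set_option maxHeartbeats 1000000 in
theorem stmt2 (X Y : H →L[ℂ] H) (α β : ℝ) (hα : 0 ≤ α ∧ α ≤ 1) (hβ : 0 ≤ β ∧ β ≤ 1)
    (x : H) (hx : ‖x‖ = 1) :
    ‖⟪X x, x⟫_ℂ * ⟪Y x, x⟫_ℂ‖ ≤
      (1 / 4) * ‖α • oabs X ^ 2 + (1 - α) • oabs (ContinuousLinearMap.adjoint X) ^ 2
                  + β • oabs Y ^ 2 + (1 - β) • oabs (ContinuousLinearMap.adjoint Y) ^ 2‖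
        + (1 / 8) * ‖oabs X ^ 2 + oabs (ContinuousLinearMap.adjoint Y) ^ 2‖
        + (1 / 4) * numRad (Y * X) := by
  obtain ⟨hα0, hα1⟩ := hα
  obtain ⟨hβ0, hβ1⟩ := hβ
  set M1 := α • oabs X ^ 2 + (1 - α) • oabs (ContinuousLinearMap.adjoint X) ^ 2
      + β • oabs Y ^ 2 + (1 - β) • oabs (ContinuousLinearMap.adjoint Y) ^ 2 with hM1
  set M2 := oabs X ^ 2 + oabs (ContinuousLinearMap.adjoint Y) ^ 2 with hM2
  set p := ‖X x‖
  set q := ‖ContinuousLinearMap.adjoint X x‖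
  set r := ‖Y x‖
  set s := ‖ContinuousLinearMap.adjoint Y x‖
  set a := ‖⟪X x, x⟫_ℂ‖ with ha
  set b := ‖⟪Y x, x⟫_ℂ‖ with hb
  -- basic facts
  have hap : a ≤ p := by
    calc a ≤ ‖X x‖ * ‖x‖ := norm_inner_le_norm _ _
      _ = p := by rw [hx]; ring
  have haq : a ≤ q := by
    have : ⟪X x, x⟫_ℂ = starRingEnd ℂ ⟪x, X x⟫_ℂ := (inner_conj_symm _ _).symm
    rw [ha, this, RCLike.norm_conj, ← ContinuousLinearMap.adjoint_inner_left]
    calc ‖⟪ContinuousLinearMap.adjoint X x, x⟫_ℂ‖ ≤ ‖ContinuousLinearMap.adjoint X x‖ * ‖x‖ :=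
          norm_inner_le_norm _ _
      _ = q := by rw [hx]; ring
  have hbr : b ≤ r := by
    calc b ≤ ‖Y x‖ * ‖x‖ := norm_inner_le_norm _ _
      _ = r := by rw [hx]; ring
  have hbs : b ≤ s := by
    have : ⟪Y x, x⟫_ℂ = starRingEnd ℂ ⟪x, Y x⟫_ℂ := (inner_conj_symm _ _).symm
    rw [hb, this, RCLike.norm_conj, ← ContinuousLinearMap.adjoint_inner_left]
    calc ‖⟪ContinuousLinearMap.adjoint Y x, x⟫_ℂ‖ ≤ ‖ContinuousLinearMap.adjoint Y x‖ * ‖x‖ :=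
          norm_inner_le_norm _ _
      _ = s := by rw [hx]; ring
  have ha0 : 0 ≤ a := norm_nonneg _
  have hb0 : 0 ≤ b := norm_nonneg _
  have hp0 : 0 ≤ p := norm_nonneg _
  have hq0 : 0 ≤ q := norm_nonneg _
  have hr0 : 0 ≤ r := norm_nonneg _
  have hs0 : 0 ≤ s := norm_nonneg _
  -- inner products with oabs squares
  have hinX : ⟪(oabs X ^ 2) x, x⟫_ℂ = (p : ℂ) ^ 2 := by
    rw [oabs_sq]
    simp only [ContinuousLinearMap.mul_apply]
    rw [ContinuousLinearMap.adjoint_inner_left]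
    rw [inner_self_eq_norm_sq_to_K]
    norm_num
    rfl
  have hinX' : ⟪(oabs (ContinuousLinearMap.adjoint X) ^ 2) x, x⟫_ℂ = (q : ℂ) ^ 2 := by
    rw [oabs_sq]
    simp only [ContinuousLinearMap.mul_apply]
    rw [ContinuousLinearMap.adjoint_inner_left]
    rw [inner_self_eq_norm_sq_to_K]
    norm_num
    rfl
  have hinY : ⟪(oabs Y ^ 2) x, x⟫_ℂ = (r : ℂ) ^ 2 := by
    rw [oabs_sq]
    simp only [ContinuousLinearMap.mul_apply]
    rw [ContinuousLinearMap.adjoint_inner_left]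
    rw [inner_self_eq_norm_sq_to_K]
    norm_num
    rfl
  have hinY' : ⟪(oabs (ContinuousLinearMap.adjoint Y) ^ 2) x, x⟫_ℂ = (s : ℂ) ^ 2 := by
    rw [oabs_sq]
    simp only [ContinuousLinearMap.mul_apply]
    rw [ContinuousLinearMap.adjoint_inner_left]
    rw [inner_self_eq_norm_sq_to_K]
    norm_num
    rfl
  -- bound 1 : α p² + (1-α) q² + β r² + (1-β) s² ≤ ‖M1‖
  have hM1bound : α * p ^ 2 + (1 - α) * q ^ 2 + β * r ^ 2 + (1 - β) * s ^ 2 ≤ ‖M1‖ := by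
    have hin : ⟪M1 x, x⟫_ℂ =
        ((α * p ^ 2 + (1 - α) * q ^ 2 + β * r ^ 2 + (1 - β) * s ^ 2 : ℝ) : ℂ) := by
      rw [hM1]
      simp only [ContinuousLinearMap.add_apply, ContinuousLinearMap.smul_apply,
        inner_add_left]
      rw [inner_real_smul_left', inner_real_smul_left', inner_real_smul_left',
        inner_real_smul_left', hinX, hinX', hinY, hinY']
      push_cast
      ring
    have h1 : ‖⟪M1 x, x⟫_ℂ‖ ≤ ‖M1‖ := by
      calc ‖⟪M1 x, x⟫_ℂ‖ ≤ ‖M1 x‖ * ‖x‖ := norm_inner_le_norm _ _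
        _ ≤ (‖M1‖ * ‖x‖) * ‖x‖ := by
            exact mul_le_mul_of_nonneg_right (M1.le_opNorm x) (norm_nonneg x)
        _ = ‖M1‖ := by rw [hx]; ring
    rw [hin] at h1
    rw [Complex.norm_real] at h1
    exact le_trans (le_abs_self _) h1
  -- bound 2 : p² + s² ≤ ‖M2‖
  have hM2bound : p ^ 2 + s ^ 2 ≤ ‖M2‖ := by
    have hin : ⟪M2 x, x⟫_ℂ = ((p ^ 2 + s ^ 2 : ℝ) : ℂ) := by
      rw [hM2]
      simp only [ContinuousLinearMap.add_apply, inner_add_left]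
      rw [hinX, hinY']
      push_cast; ring
    have h1 : ‖⟪M2 x, x⟫_ℂ‖ ≤ ‖M2‖ := by
      calc ‖⟪M2 x, x⟫_ℂ‖ ≤ ‖M2 x‖ * ‖x‖ := norm_inner_le_norm _ _
        _ ≤ (‖M2‖ * ‖x‖) * ‖x‖ := by
            exact mul_le_mul_of_nonneg_right (M2.le_opNorm x) (norm_nonneg x)
        _ = ‖M2‖ := by rw [hx]; ring
    rw [hin, Complex.norm_real] at h1
    exact le_trans (le_abs_self _) h1
  -- Buzano bound
  have hbuz : a * b ≤ (p * s + numRad (Y * X)) / 2 := by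
    have h1 : ⟪x, ContinuousLinearMap.adjoint Y x⟫_ℂ = ⟪Y x, x⟫_ℂ :=
      ContinuousLinearMap.adjoint_inner_right Y x x
    have h2 := buzano x (X x) (ContinuousLinearMap.adjoint Y x) hx
    rw [h1] at h2
    have h3 : ⟪X x, ContinuousLinearMap.adjoint Y x⟫_ℂ = ⟪(Y * X) x, x⟫_ℂ := by
      rw [ContinuousLinearMap.mul_apply]
      exact ContinuousLinearMap.adjoint_inner_right Y (X x) x
    rw [h3] at h2
    have h4 : ‖⟪(Y * X) x, x⟫_ℂ‖ ≤ numRad (Y * X) := norm_inner_le_numRad _ x hx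
    calc a * b = ‖⟪X x, x⟫_ℂ * ⟪Y x, x⟫_ℂ‖ := (norm_mul _ _).symm
      _ ≤ (p * s + ‖⟪(Y * X) x, x⟫_ℂ‖) / 2 := h2
      _ ≤ (p * s + numRad (Y * X)) / 2 := by linarith
  -- combine
  have ha2 : a ^ 2 ≤ α * p ^ 2 + (1 - α) * q ^ 2 := by
    nlinarith [mul_le_mul hap hap ha0 hp0, mul_le_mul haq haq ha0 hq0]
  have hb2 : b ^ 2 ≤ β * r ^ 2 + (1 - β) * s ^ 2 := by
    nlinarith [mul_le_mul hbr hbr hb0 hr0, mul_le_mul hbs hbs hb0 hs0]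
  have hab1 : a * b ≤ ‖M1‖ / 2 := by
    nlinarith [sq_nonneg (a - b)]
  have hab2 : a * b ≤ ‖M2‖ / 4 + numRad (Y * X) / 2 := by
    nlinarith [sq_nonneg (p - s)]
  calc ‖⟪X x, x⟫_ℂ * ⟪Y x, x⟫_ℂ‖ = a * b := norm_mul _ _
    _ ≤ (1 / 4) * ‖M1‖ + (1 / 8) * ‖M2‖ + (1 / 4) * numRad (Y * X) := by linarith
end
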